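/- Let (X,d) be a metric space and 𝔅 a bornology on X with closed base. Suppose that for each sequence (𝒰_n) of 𝔅^s-covers of X there is a sequence (𝒱_n) with 𝒱_n ⊆ 𝒰_n, no 𝒱_n a 𝔅^s-cover of X, and ⋃_n 𝒱_n a 𝔅^s-cover of X. Then C(X,ℝ) with the topology τ^s_𝔅 is a selectively strictly A-space at the zero function. -/
import Mathlib


open Set Metric

variable {X : Type*} [MetricSpace X]

/-- The δ-enlargement of a set `B`: union of open δ-balls around points of `B`. -/
def enl (B : Set X) (δ : ℝ) : Set X := ⋃ b ∈ B, Metric.ball b δ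

/-- A bornology (in the sense of Hu/Hogbe-Nlend): a family of nonempty subsets
covering `X`, closed under finite unions and hereditary. -/
def IsBorn (𝔅 : Set (Set X)) : Prop :=
  (∀ B ∈ 𝔅, B.Nonempty) ∧ (⋃₀ 𝔅 = Set.univ) ∧
  (∀ B₁ ∈ 𝔅, ∀ B₂ ∈ 𝔅, B₁ ∪ B₂ ∈ 𝔅) ∧
  (∀ B ∈ 𝔅, ∀ A : Set X, A ⊆ B → A.Nonempty → A ∈ 𝔅)

/-- The bornology has a base consisting of closed sets. -/
def HasClosedBase (𝔅 : Set (Set X)) : Prop :=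
  ∃ 𝔅₀ ⊆ 𝔅, (∀ B ∈ 𝔅₀, IsClosed B) ∧ ∀ B ∈ 𝔅, ∃ B₀ ∈ 𝔅₀, B ⊆ B₀

/-- A strong 𝔅-cover (𝔅ˢ-cover): an open cover 𝒰 of X with X ∉ 𝒰 such that for
every `B ∈ 𝔅` some δ-enlargement of `B` lies in a member of 𝒰. -/
def IsBsCover (𝔅 : Set (Set X)) (𝒰 : Set (Set X)) : Prop :=
  (∀ U ∈ 𝒰, IsOpen U) ∧ Set.univ ∉ 𝒰 ∧ ⋃₀ 𝒰 = Set.univ ∧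
  ∀ B ∈ 𝔅, ∃ U ∈ 𝒰, ∃ δ > 0, enl B δ ⊆ U

/-- A γ_{𝔅ˢ}-cover: an infinite countable open cover `(U n)` such that for every
`B ∈ 𝔅` there are `n₀` and positive reals `δ n` (for `n ≥ n₀`) with
`enl B (δ n) ⊆ U n` for all `n ≥ n₀`. -/
def IsGammaCover (𝔅 : Set (Set X)) (U : ℕ → Set X) : Prop :=
  (∀ n, IsOpen (U n)) ∧ (⋃ n, U n) = Set.univ ∧ (Set.range U).Infinite ∧
  ∀ B ∈ 𝔅, ∃ n₀ : ℕ, ∃ δ : ℕ → ℝ, ∀ n ≥ n₀, 0 < δ n ∧ enl B (δ n) ⊆ U n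

/-- `g` belongs to the basic τˢ_𝔅-neighborhood `[B,ε]ˢ(f)`. -/
def SNbhd (B : Set X) (ε : ℝ) (f g : C(X, ℝ)) : Prop :=
  ∃ δ > 0, ∀ x ∈ enl B δ, |g x - f x| < ε

/-- `f` lies in the τˢ_𝔅-closure of `A`. -/
def SCl (𝔅 : Set (Set X)) (A : Set C(X, ℝ)) (f : C(X, ℝ)) : Prop :=
  ∀ B ∈ 𝔅, ∀ ε > 0, ∃ g ∈ A, SNbhd B ε f g

/-- The sequence `g` τˢ_𝔅-converges to `f`. -/
def SConv (𝔅 : Set (Set X)) (g : ℕ → C(X, ℝ)) (f : C(X, ℝ)) : Prop :=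
  ∀ B ∈ 𝔅, ∀ ε > 0, ∃ N : ℕ, ∀ n ≥ N, SNbhd B ε f (g n)

lemma enl_mono {B B' : Set X} (h : B ⊆ B') (δ : ℝ) : enl B δ ⊆ enl B' δ := by
  intro x hx
  rcases mem_iUnion₂.mp hx with ⟨b, hb, hxb⟩
  exact mem_iUnion₂.mpr ⟨b, h hb, hxb⟩
lemma mem_enl_self {B : Set X} {x : X} (hx : x ∈ B) {δ : ℝ} (hδ : 0 < δ) : x ∈ enl B δ :=
  mem_iUnion₂.mpr ⟨x, hx, Metric.mem_ball_self hδ⟩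
lemma singleton_mem_born {𝔅 : Set (Set X)} (h : IsBorn 𝔅) (x : X) : ({x} : Set X) ∈ 𝔅 := by
  obtain ⟨-, hcov, -, hher⟩ := h
  have hx : x ∈ ⋃₀ 𝔅 := hcov ▸ mem_univ x
  obtain ⟨B, hB, hxB⟩ := hx
  exact hher B hB {x} (singleton_subset_iff.mpr hxB) ⟨x, rfl⟩

/-- The basic open set attached to `g` at level `n`. -/
def Ug (n : ℕ) (g : C(X, ℝ)) : Set X := {x | |g x| < 1 / ((n : ℝ) + 1)}

/-- The candidate 𝔅ˢ-cover attached to `A n`. -/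
def Ucov (A : ℕ → Set C(X, ℝ)) (n : ℕ) : Set (Set X) := Ug n '' A n

lemma ug_open (n : ℕ) (g : C(X, ℝ)) : IsOpen (Ug (X := X) n g) :=
  isOpen_lt (continuous_abs.comp g.continuous) continuous_const

lemma eps_pos (n : ℕ) : (0 : ℝ) < 1 / ((n : ℝ) + 1) := by positivity

lemma eps_mono {m n : ℕ} (h : m ≤ n) : 1 / ((n : ℝ) + 1) ≤ 1 / ((m : ℝ) + 1) := by
  apply one_div_le_one_div_of_le (by positivity)
  have : (m : ℝ) ≤ n := Nat.cast_le.mpr h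
  linarith

lemma snbhd_zero_iff {B : Set X} {ε : ℝ} {g : C(X, ℝ)} :
    SNbhd B ε 0 g ↔ ∃ δ > 0, ∀ x ∈ enl B δ, |g x| < ε := by
  unfold SNbhd; simp

lemma ucov_isBsCover {𝔅 : Set (Set X)} (h𝔅 : IsBorn 𝔅) {A : ℕ → Set C(X, ℝ)} {n : ℕ}
    (hA : SCl 𝔅 (A n) 0) (hnS : ¬ ∃ g ∈ A n, ∀ x, |g x| < 1 / ((n : ℝ) + 1)) :
    IsBsCover 𝔅 (Ucov A n) := by
  refine ⟨?_, ?_, ?_, ?_⟩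
  · rintro U ⟨g, -, rfl⟩
    exact ug_open n g
  · rintro ⟨g, hg, hU⟩
    exact hnS ⟨g, hg, fun x => (hU.symm ▸ mem_univ x : x ∈ Ug n g)⟩
  · rw [eq_univ_iff_forall]
    intro x
    obtain ⟨g, hg, hsn⟩ := hA {x} (singleton_mem_born h𝔅 x) _ (eps_pos n)
    obtain ⟨δ, hδ, hgs⟩ := snbhd_zero_iff.mp hsn
    exact ⟨Ug n g, ⟨g, hg, rfl⟩, hgs x (mem_enl_self (Set.mem_singleton x) hδ)⟩
  · intro B hB
    obtain ⟨g, hg, hsn⟩ := hA B hB _ (eps_pos n)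
    obtain ⟨δ, hδ, hgs⟩ := snbhd_zero_iff.mp hsn
    exact ⟨Ug n g, ⟨g, hg, rfl⟩, δ, hδ, fun x hx => hgs x hx⟩

lemma notCover_witness {𝔅 : Set (Set X)} (h𝔅 : IsBorn 𝔅) {A : ℕ → Set C(X, ℝ)} {n : ℕ}
    (hnS : ¬ ∃ g ∈ A n, ∀ x, |g x| < 1 / ((n : ℝ) + 1))
    {𝒱 : Set (Set X)} (h𝒱 : 𝒱 ⊆ Ucov A n) (hnc : ¬ IsBsCover 𝔅 𝒱) :
    ∃ C ∈ 𝔅, ∀ V ∈ 𝒱, ∀ δ > 0, ¬ enl C δ ⊆ V := by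
  by_contra hcon
  push_neg at hcon
  refine hnc ⟨?_, ?_, ?_, ?_⟩
  · intro U hU
    obtain ⟨g, -, rfl⟩ := h𝒱 hU
    exact ug_open n g
  · intro hu
    obtain ⟨g, hg, hU⟩ := h𝒱 hu
    exact hnS ⟨g, hg, fun x => (hU.symm ▸ mem_univ x : x ∈ Ug n g)⟩
  · rw [eq_univ_iff_forall]
    intro x
    obtain ⟨V, hV, δ, hδ, hsub⟩ := hcon {x} (singleton_mem_born h𝔅 x)
    exact ⟨V, hV, hsub (mem_enl_self (Set.mem_singleton x) hδ)⟩
  · intro B hB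
    obtain ⟨V, hV, δ, hδ, hsub⟩ := hcon B hB
    exact ⟨V, hV, δ, hδ, hsub⟩

lemma finset_biUnion_mem_born {𝔅 : Set (Set X)} (h𝔅 : IsBorn 𝔅) (C : ℕ → Set X) :
    ∀ s : Finset ℕ, s.Nonempty → (∀ i ∈ s, C i ∈ 𝔅) → (⋃ i ∈ s, C i) ∈ 𝔅 := by
  classical
  intro s
  induction s using Finset.induction_on with
  | empty => intro h; exact absurd h (by simp)
  | @insert a s ha ih =>
      intro _ h
      by_cases hs : s.Nonempty
      · rw [Finset.set_biUnion_insert]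
        exact h𝔅.2.2.1 _ (h a (Finset.mem_insert_self a s)) _
          (ih hs fun i hi => h i (Finset.mem_insert_of_mem hi))
      · rw [Finset.not_nonempty_iff_eq_empty.mp hs]
        simpa using h a (by simp)

theorem statement18 (𝔅 : Set (Set X)) (h𝔅 : IsBorn 𝔅) (hcb : HasClosedBase 𝔅)
    (hsel : ∀ 𝒰 : ℕ → Set (Set X), (∀ n, IsBsCover 𝔅 (𝒰 n)) →
      ∃ 𝒱 : ℕ → Set (Set X), (∀ n, 𝒱 n ⊆ 𝒰 n) ∧
        (∀ n, ¬ IsBsCover 𝔅 (𝒱 n)) ∧ IsBsCover 𝔅 (⋃ n, 𝒱 n)) :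
    ∀ A : ℕ → Set C(X, ℝ),
      (∀ n, SCl 𝔅 (A n) 0 ∧ (0 : C(X, ℝ)) ∉ A n) →
      ∃ T : ℕ → Set C(X, ℝ), (∀ n, T n ⊆ A n) ∧
        SCl 𝔅 (⋃ n, T n) 0 ∧ ∀ n, ¬ SCl 𝔅 (T n) 0 := by
  classical
  intro A hA
  -- X is nonempty, else `hsel` applied to the empty cover is contradictory
  by_cases hX : Nonempty X
  swap
  · exfalso
    have huniv : (Set.univ : Set X) = ∅ := univ_eq_empty_iff.mpr (not_nonempty_iff.mp hX)
    have hcov : IsBsCover 𝔅 (∅ : Set (Set X)) := by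
      refine ⟨by simp, by simp, by rw [sUnion_empty, huniv], ?_⟩
      intro B hB
      obtain ⟨x, -⟩ := h𝔅.1 B hB
      exact ((not_nonempty_iff.mp hX).false x).elim
    obtain ⟨𝒱, h1, h2, -⟩ := hsel (fun _ => ∅) (fun _ => hcov)
    have h𝒱0 : 𝒱 0 = ∅ := subset_empty_iff.mp (h1 0)
    exact h2 0 (h𝒱0 ▸ hcov)
  -- the "degenerate" levels: those n where A n contains an everywhere-small function
  set P : ℕ → Prop := fun n => ∃ g ∈ A n, ∀ x, |g x| < 1 / ((n : ℝ) + 1) with hP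
  by_cases hSinf : {n | P n}.Infinite
  · -- infinitely many degenerate levels: pick one small function at each of them
    have hgch : ∀ n, ∃ g : C(X, ℝ), P n → g ∈ A n ∧ ∀ x, |g x| < 1 / ((n : ℝ) + 1) := by
      intro n
      by_cases h : P n
      · obtain ⟨g, hg1, hg2⟩ := h
        exact ⟨g, fun _ => ⟨hg1, hg2⟩⟩
      · exact ⟨0, fun hn => absurd hn h⟩
    choose gs hgs using hgch
    refine ⟨fun n => {g | P n ∧ g = gs n}, fun n => ?_, ?_, fun n => ?_⟩
    · rintro g ⟨hPn, rfl⟩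
      exact (hgs n hPn).1
    · -- SCl of the union at 0
      intro B hB ε hε
      obtain ⟨k, hk⟩ := exists_nat_one_div_lt hε
      obtain ⟨n, hnP, hkn⟩ := hSinf.exists_gt k
      have hnP : P n := hnP
      refine ⟨gs n, mem_iUnion.mpr ⟨n, ⟨hnP, rfl⟩⟩, ?_⟩
      rw [snbhd_zero_iff]
      refine ⟨1, one_pos, fun x _ => ?_⟩
      calc |gs n x| < 1 / ((n : ℝ) + 1) := (hgs n hnP).2 x
        _ ≤ 1 / ((k : ℝ) + 1) := eps_mono hkn.le
        _ < ε := hk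
    · -- no single T n has 0 in its closure
      intro hscl
      by_cases h : P n
      · have hgA : gs n ∈ A n := (hgs n h).1
        have hgne : gs n ≠ 0 := fun hg0 => (hA n).2 (hg0 ▸ hgA)
        have hx0 : ∃ x, gs n x ≠ 0 := by
          by_contra hc
          push_neg at hc
          exact hgne (ContinuousMap.ext fun x => by simp [hc x])
        obtain ⟨x₀, hx₀⟩ := hx0
        obtain ⟨g', hg', hsn⟩ := hscl {x₀} (singleton_mem_born h𝔅 x₀) _ (abs_pos.mpr hx₀)
        obtain ⟨-, rfl⟩ := hg'
        obtain ⟨δ, hδ, hgsn⟩ := snbhd_zero_iff.mp hsn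
        exact lt_irrefl _ (hgsn x₀ (mem_enl_self (Set.mem_singleton x₀) hδ))
      · obtain ⟨g', hg', -⟩ :=
          hscl {hX.some} (singleton_mem_born h𝔅 hX.some) 1 one_pos
        exact h hg'.1
  · -- finitely many degenerate levels
    have hSfin : {n | P n}.Finite := not_infinite.mp hSinf
    obtain ⟨m₀, hm₀⟩ : ∃ m₀, ∀ n, m₀ ≤ n → ¬ P n := by
      obtain ⟨b, hb⟩ := hSfin.bddAbove
      exact ⟨b + 1, fun n hn hPn => absurd (hb (show n ∈ {n | P n} from hPn)) (by omega)⟩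
    have hcover : ∀ n, m₀ ≤ n → IsBsCover 𝔅 (Ucov A n) :=
      fun n hn => ucov_isBsCover h𝔅 (hA n).1 (hm₀ n hn)
    have Hsel : ∀ m : ℕ, ∃ 𝒱 : ℕ → Set (Set X),
        (∀ k, 𝒱 k ⊆ Ucov A (max m m₀ + k)) ∧ (∀ k, ¬ IsBsCover 𝔅 (𝒱 k)) ∧
        IsBsCover 𝔅 (⋃ k, 𝒱 k) :=
      fun m => hsel _ (fun k => hcover _ (le_trans (le_max_right m m₀) (Nat.le_add_right _ _)))
    choose V hV1 hV2 hV3 using Hsel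
    refine ⟨fun n => {g ∈ A n | ∃ m, m ≤ n ∧ max m m₀ ≤ n ∧ Ug n g ∈ V m (n - max m m₀)},
      fun n g hg => hg.1, ?_, fun n => ?_⟩
    · -- SCl of the union at 0
      intro B hB ε hε
      obtain ⟨k, hk⟩ := exists_nat_one_div_lt hε
      set m := max k m₀ with hmdef
      have hmm : max m m₀ = m := max_eq_left (le_max_right k m₀)
      obtain ⟨-, -, -, hprop⟩ := hV3 m
      obtain ⟨U, hU, δ, hδ, hsub⟩ := hprop B hB
      obtain ⟨j, hUj⟩ := mem_iUnion.mp hU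
      obtain ⟨g, hgA, rfl⟩ := hV1 m j hUj
      refine ⟨g, mem_iUnion.mpr ⟨max m m₀ + j, hgA, m, ?_, ?_, ?_⟩, ?_⟩
      · omega
      · omega
      · rwa [Nat.add_sub_cancel_left]
      · rw [snbhd_zero_iff]
        refine ⟨δ, hδ, fun x hx => ?_⟩
        have hxU : x ∈ Ug (max m m₀ + j) g := hsub hx
        calc |g x| < 1 / ((max m m₀ + j : ℕ) + 1 : ℝ) := hxU
          _ ≤ 1 / ((k : ℝ) + 1) := eps_mono (by omega)
          _ < ε := hk
    · -- no single T n has 0 in its closure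
      intro hscl
      by_cases hn : m₀ ≤ n
      · have hwit : ∀ m, m ≤ n →
            ∃ C ∈ 𝔅, ∀ V' ∈ V m (n - max m m₀), ∀ δ > 0, ¬ enl C δ ⊆ V' := by
          intro m hm
          have hmax : max m m₀ + (n - max m m₀) = n := by omega
          refine notCover_witness h𝔅 (hm₀ n hn) ?_ (hV2 m (n - max m m₀))
          have := hV1 m (n - max m m₀)
          rwa [hmax] at this
        choose! C hC1 hC2 using hwit
        have hB' : (⋃ m ∈ Finset.range (n + 1), C m) ∈ 𝔅 :=
          finset_biUnion_mem_born h𝔅 C _ ⟨0, Finset.mem_range.mpr (Nat.succ_pos n)⟩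
            (fun m hm => hC1 m (by simpa [Nat.lt_succ_iff] using Finset.mem_range.mp hm))
        obtain ⟨g, hgT, hsn⟩ := hscl _ hB' _ (eps_pos n)
        obtain ⟨-, m, hm, -, hmem⟩ := hgT
        obtain ⟨δ, hδ, hgs⟩ := snbhd_zero_iff.mp hsn
        refine hC2 m hm (Ug n g) hmem δ hδ ?_
        refine subset_trans (enl_mono ?_ δ) (fun x hx => hgs x hx)
        exact subset_biUnion_of_mem (Finset.mem_range.mpr (by omega))
      · obtain ⟨g, hgT, -⟩ := hscl {hX.some} (singleton_mem_born h𝔅 hX.some) 1 one_pos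
        obtain ⟨-, m, -, hmax, -⟩ := hgT
        omega
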